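/- arXiv:2010.09591 — 2 statements merged into one kernel-verified Lean document; each statement's English description precedes it below -/
import Mathlib

section
/- Let D1 ⊆ ℝ^m be a nonempty compact set, D2 ⊆ ℝ^k a nonempty set, s : ℝ^m → ℝ a continuous function, and F : ℝ × ℝ^k → ℝ such that for every v ∈ D2 the map t ↦ F(t, v) is monotone nonincreasing on the interval [min_{u∈D1} s(u), max_{u∈D1} s(u)]. Let s* = max_{u∈D1} s(u). Then the infimum over D1 × D2 of the structurally separable function f(u,v) = F(s(u), v) equals the infimum over D2 of v ↦ F(s*, v). -/
/-- Decreasing case of Theorem 1 (subdomain separability): for a structurally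
separable objective `f(u,v) = F(s(u), v)` that is monotone nonincreasing in the
separator value on the range of `s` over `D1`, the global infimum over
`D1 ×ˢ D2` equals the infimum over `D2` of `F(s*, ·)` where
`s* = max_{u ∈ D1} s(u)`. -/
theorem subdomain_separability_decreasing
    (m k : ℕ) (D1 : Set (Fin m → ℝ)) (D2 : Set (Fin k → ℝ))
    (hD1c : IsCompact D1) (hD1 : D1.Nonempty) (hD2 : D2.Nonempty)
    (s : (Fin m → ℝ) → ℝ) (hs : Continuous s)
    (F : ℝ → (Fin k → ℝ) → ℝ)
    (hmono : ∀ v ∈ D2, ∀ t1 ∈ Set.Icc (sInf (s '' D1)) (sSup (s '' D1)),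
      ∀ t2 ∈ Set.Icc (sInf (s '' D1)) (sSup (s '' D1)), t1 ≤ t2 → F t2 v ≤ F t1 v) :
    sInf ((fun p : (Fin m → ℝ) × (Fin k → ℝ) => F (s p.1) p.2) '' (D1 ×ˢ D2))
      = sInf ((fun v => F (sSup (s '' D1)) v) '' D2) := by
  set A := ((fun p : (Fin m → ℝ) × (Fin k → ℝ) => F (s p.1) p.2) '' (D1 ×ˢ D2)) with hA
  set B := ((fun v => F (sSup (s '' D1)) v) '' D2) with hB
  have himg : IsCompact (s '' D1) := hD1c.image hs
  have himgne : (s '' D1).Nonempty := hD1.image s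
  have hbddA : BddAbove (s '' D1) := himg.bddAbove
  have hbddB : BddBelow (s '' D1) := himg.bddBelow
  -- s attains its max
  obtain ⟨u0, hu0, hmax⟩ := hD1c.exists_isMaxOn hD1 hs.continuousOn
  have hsup : sSup (s '' D1) = s u0 := by
    apply le_antisymm
    · exact csSup_le himgne (by rintro x ⟨u, hu, rfl⟩; exact hmax hu)
    · exact le_csSup hbddA ⟨u0, hu0, rfl⟩
  have hmem : ∀ u ∈ D1, s u ∈ Set.Icc (sInf (s '' D1)) (sSup (s '' D1)) := fun u hu =>
    ⟨csInf_le hbddB ⟨u, hu, rfl⟩, le_csSup hbddA ⟨u, hu, rfl⟩⟩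
  have hstar : sSup (s '' D1) ∈ Set.Icc (sInf (s '' D1)) (sSup (s '' D1)) := by
    exact hsup ▸ hmem u0 hu0
  -- B ⊆ A
  have hBA : B ⊆ A := by
    rintro x ⟨v, hv, rfl⟩
    exact ⟨(u0, v), ⟨hu0, hv⟩, by simp [hsup]⟩
  have hAne : A.Nonempty := hD2.elim fun v hv => ⟨_, hBA ⟨v, hv, rfl⟩⟩
  have hBne : B.Nonempty := hD2.image _
  -- every element of A dominates an element of B
  have hdom : ∀ x ∈ A, ∃ y ∈ B, y ≤ x := by
    rintro x ⟨⟨u, v⟩, ⟨hu, hv⟩, rfl⟩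
    refine ⟨F (sSup (s '' D1)) v, ⟨v, hv, rfl⟩, ?_⟩
    exact hmono v hv (s u) (hmem u hu) (sSup (s '' D1)) hstar ((hmem u hu).2)
  by_cases hbb : BddBelow B
  · have hbbA : BddBelow A := by
      obtain ⟨b, hb⟩ := hbb
      refine ⟨b, fun x hx => ?_⟩
      obtain ⟨y, hy, hyx⟩ := hdom x hx
      exact (hb hy).trans hyx
    apply le_antisymm
    · exact csInf_le_csInf hbbA hBne hBA
    · refine le_csInf hAne fun x hx => ?_
      obtain ⟨y, hy, hyx⟩ := hdom x hx
      exact (csInf_le hbb hy).trans hyx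
  · have hbbA : ¬ BddBelow A := fun h => hbb (h.mono hBA)
    rw [Real.sInf_of_not_bddBelow hbbA, Real.sInf_of_not_bddBelow hbb]
end

section
/- Let D_i = [a_i, b_i] ⊆ ℝ, i = 0,…,n-1, be nonempty compact intervals. For x ∈ ∏_i D_i define f(x) = y_n via y_0 = 1, y_{i+1} = exp(x_i^2 + y_i - 1). Define the sequential recursion ŷ_0 = 1 and ŷ_{i+1} = min_{t ∈ D_i} exp(t^2 + ŷ_i - 1). Then the minimum of f over ∏_i D_i equals ŷ_n. -/
/-- The intermediate values `yᵢ` of the recursive exponential program: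
`y₀ = 1` and `y_{i+1} = exp(xᵢ² + yᵢ - 1)` for `i < n`. -/
noncomputable def recExpSeq (n : ℕ) (x : Fin n → ℝ) : ℕ → ℝ
  | 0 => 1
  | i + 1 =>
      if h : i < n then Real.exp (x ⟨i, h⟩ ^ 2 + recExpSeq n x i - 1)
      else recExpSeq n x i

/-- Projection of `0` onto `[a, b]`: the minimizer of `t²` over `[a, b]`. -/
noncomputable def projZero (a b : ℝ) : ℝ := max a (min 0 b)

lemma projZero_mem {a b : ℝ} (h : a ≤ b) : projZero a b ∈ Set.Icc a b :=
  ⟨le_max_left _ _, max_le h (min_le_right 0 b)⟩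

lemma projZero_sq_le {a b t : ℝ} (ht : t ∈ Set.Icc a b) :
    (projZero a b) ^ 2 ≤ t ^ 2 := by
  obtain ⟨h1, h2⟩ := ht
  unfold projZero
  rcases le_total 0 a with ha | ha
  · rw [min_eq_left (ha.trans (h1.trans h2)), max_eq_left ha]
    nlinarith
  · rcases le_total b 0 with hb | hb
    · rw [min_eq_right hb, max_eq_right (h1.trans h2)]
      nlinarith
    · rw [min_eq_left hb, max_eq_right ha]
      nlinarith

/-- Sequential decomposition of the global minimization of the recursive
exponential function `f(x) = yₙ` over a box `∏ᵢ [aᵢ, bᵢ]`: with `ŷ₀ = 1` and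
`ŷ_{i+1} = min_{t ∈ [aᵢ, bᵢ]} exp(t² + ŷᵢ - 1)`, the minimum of `f` over the
box equals `ŷₙ`. -/
theorem recursive_exponential_sequential_decomposition
    (n : ℕ) (a b : Fin n → ℝ) (hab : ∀ i, a i ≤ b i)
    (yhat : ℕ → ℝ) (h0 : yhat 0 = 1)
    (hs : ∀ i : Fin n, yhat ((i : ℕ) + 1)
        = sInf ((fun t : ℝ => Real.exp (t ^ 2 + yhat i - 1)) '' Set.Icc (a i) (b i))) :
    sInf ((fun x : Fin n → ℝ => recExpSeq n x n) ''
        Set.pi Set.univ (fun i => Set.Icc (a i) (b i)))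
      = yhat n := by
  set xs : Fin n → ℝ := fun i => projZero (a i) (b i) with hxsdef
  have hxs : xs ∈ Set.pi Set.univ (fun i => Set.Icc (a i) (b i)) :=
    fun i _ => projZero_mem (hab i)
  have key : ∀ i : Fin n,
      IsLeast ((fun t : ℝ => Real.exp (t ^ 2 + yhat i - 1)) '' Set.Icc (a i) (b i))
        (Real.exp ((xs i) ^ 2 + yhat i - 1)) := by
    intro i
    constructor
    · exact ⟨xs i, projZero_mem (hab i), rfl⟩
    · rintro v ⟨t, ht, rfl⟩
      have := projZero_sq_le ht
      exact Real.exp_le_exp.2 (by linarith)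
  have hstep : ∀ i : Fin n, yhat ((i : ℕ) + 1) = Real.exp ((xs i) ^ 2 + yhat i - 1) :=
    fun i => (hs i).trans ((key i).csInf_eq)
  have hxsval : ∀ i, i ≤ n → recExpSeq n xs i = yhat i := by
    intro i
    induction i with
    | zero => intro _; simp [recExpSeq, h0]
    | succ j ih =>
      intro hj
      have hjn : j < n := hj
      have := ih (le_of_lt hjn)
      simp only [recExpSeq, dif_pos hjn, this]
      exact (hstep ⟨j, hjn⟩).symm
  have hlb : ∀ x ∈ Set.pi Set.univ (fun i => Set.Icc (a i) (b i)),
      ∀ i, i ≤ n → yhat i ≤ recExpSeq n x i := by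
    intro x hx i
    induction i with
    | zero => intro _; simp [recExpSeq, h0]
    | succ j ih =>
      intro hj
      have hjn : j < n := hj
      have h1 := ih (le_of_lt hjn)
      have h2 : (xs ⟨j, hjn⟩) ^ 2 ≤ (x ⟨j, hjn⟩) ^ 2 :=
        projZero_sq_le (hx ⟨j, hjn⟩ (Set.mem_univ _))
      simp only [recExpSeq, dif_pos hjn]
      rw [hstep ⟨j, hjn⟩]
      exact Real.exp_le_exp.2 (by linarith)
  refine IsLeast.csInf_eq ⟨⟨xs, hxs, hxsval n le_rfl⟩, ?_⟩
  rintro v ⟨x, hx, rfl⟩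
  exact hlb x hx n le_rfl
end
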